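/- Let G be a group whose central quotient G/Z(G) has order pqr for primes p, q, r (not necessarily distinct). Then any two distinct proper element centralizers of G intersect exactly in Z(G). -/

import Mathlib

open Subgroup

open ArithmeticFunction ArithmeticFunction.Omega in
/-- If `m * a * b = p * q * r` with `a, b ≠ 1`, then `m = 1` or `m` is prime. -/
lemma arith_aux {p q r m a b : ℕ} (hp : p.Prime) (hq : q.Prime) (hr : r.Prime)
    (ha : a ≠ 1) (hb : b ≠ 1) (h : m * a * b = p * q * r) :
    m = 1 ∨ m.Prime := by
  have hpqr : p * q * r ≠ 0 :=
    mul_ne_zero (mul_ne_zero hp.ne_zero hq.ne_zero) hr.ne_zero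
  have hm0 : m ≠ 0 := by rintro rfl; rw [zero_mul, zero_mul] at h; exact hpqr h.symm
  have ha0 : a ≠ 0 := by rintro rfl; rw [mul_zero, zero_mul] at h; exact hpqr h.symm
  have hb0 : b ≠ 0 := by rintro rfl; rw [mul_zero] at h; exact hpqr h.symm
  have hΩ : Ω m + Ω a + Ω b = 3 := by
    have := congrArg Ω h
    rw [cardFactors_mul (mul_ne_zero hm0 ha0) hb0, cardFactors_mul hm0 ha0,
      cardFactors_mul (mul_ne_zero hp.ne_zero hq.ne_zero) hr.ne_zero,
      cardFactors_mul hp.ne_zero hq.ne_zero,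
      cardFactors_apply_prime hp, cardFactors_apply_prime hq, cardFactors_apply_prime hr] at this
    omega
  have hΩa : Ω a ≠ 0 := fun h0 => by
    rcases (Nat.primeFactorsList_eq_nil a).mp (List.eq_nil_of_length_eq_zero h0) with h' | h'
    · exact ha0 h'
    · exact ha h'
  have hΩb : Ω b ≠ 0 := fun h0 => by
    rcases (Nat.primeFactorsList_eq_nil b).mp (List.eq_nil_of_length_eq_zero h0) with h' | h'
    · exact hb0 h'
    · exact hb h'
  have : Ω m = 0 ∨ Ω m = 1 := by omega
  rcases this with h1 | h1
  · left
    rcases (Nat.primeFactorsList_eq_nil m).mp (List.eq_nil_of_length_eq_zero h1) with h' | h'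
    · exact absurd h' hm0
    · exact h'
  · right; exact cardFactors_eq_one_iff_prime.mp h1

/-- Under the hypotheses, every proper centralizer is abelian. -/
lemma centralizer_comm {G : Type*} [Group G] {p q r : ℕ}
    (hp : p.Prime) (hq : q.Prime) (hr : r.Prime)
    (h : Nat.card (G ⧸ Subgroup.center G) = p * q * r)
    {x : G} (hx : x ∉ Subgroup.center G) :
    ∀ a b : Subgroup.centralizer ({x} : Set G), a * b = b * a := by
  set H := Subgroup.centralizer ({x} : Set G) with hH
  have hxH : x ∈ H := by
    rw [hH, mem_centralizer_singleton_iff]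
  set N : Subgroup G := Subgroup.center G ⊔ Subgroup.zpowers x with hN
  have hZN : Subgroup.center G ≤ N := le_sup_left
  have hxN : x ∈ N := (le_sup_right : Subgroup.zpowers x ≤ N) (Subgroup.mem_zpowers x)
  have hNH : N ≤ H := sup_le (Subgroup.center_le_centralizer _)
    ((Subgroup.zpowers_le).mpr hxH)
  -- N centralizes H
  have hNC : N ≤ Subgroup.centralizer (H : Set G) := by
    refine sup_le (Subgroup.center_le_centralizer _) ((Subgroup.zpowers_le).mpr ?_)
    rw [Subgroup.mem_centralizer_iff]
    intro g hg
    exact (hg x (Set.mem_singleton x)).symm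
  -- N.subgroupOf H is contained in the center of H
  have hNcen : N.subgroupOf H ≤ Subgroup.center H := by
    intro g hg
    rw [Subgroup.mem_center_iff]
    intro k
    have := (Subgroup.mem_centralizer_iff).mp (hNC hg) k k.2
    exact Subtype.ext (by simpa using this)
  have hnormal : (N.subgroupOf H).Normal := by
    constructor
    intro n hn g
    have hcn : (n : H) ∈ Subgroup.center H := hNcen hn
    rw [Subgroup.mem_center_iff] at hcn
    rwa [show g * n * g⁻¹ = n by rw [hcn g]; group]
  -- index computations
  have hZidx : (Subgroup.center G).index = p * q * r := h
  have h1 : (Subgroup.center G).relIndex N * N.index = (Subgroup.center G).index :=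
    Subgroup.relIndex_mul_index hZN
  have h2 : N.relIndex H * H.index = N.index := Subgroup.relIndex_mul_index hNH
  have hkey : (Subgroup.center G).relIndex N * N.relIndex H * H.index = p * q * r := by
    rw [mul_assoc, h2, h1, hZidx]
  have hZNne : (Subgroup.center G).relIndex N ≠ 1 := fun h1 =>
    hx (Subgroup.relIndex_eq_one.mp h1 hxN)
  have hHne : H.index ≠ 1 := by
    intro h1
    have htop := Subgroup.index_eq_one.mp h1
    apply hx
    rw [Subgroup.mem_center_iff]
    intro g
    have hgH : g ∈ H := htop ▸ Subgroup.mem_top g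
    exact ((mem_centralizer_singleton_iff).mp hgH)
  have := arith_aux hp hq hr hZNne hHne
    (by rw [show N.relIndex H * (Subgroup.center G).relIndex N * H.index
        = (Subgroup.center G).relIndex N * N.relIndex H * H.index by ring, hkey])
  -- the quotient H ⧸ N.subgroupOf H is cyclic
  have hcyc : IsCyclic (H ⧸ N.subgroupOf H) := by
    rcases this with h1 | h1
    · have : Nat.card (H ⧸ N.subgroupOf H) = 1 := h1
      have : Subsingleton (H ⧸ N.subgroupOf H) :=
        Nat.card_eq_one_iff_unique.mp this |>.1
      infer_instance
    · exact isCyclic_of_prime_card (p := N.relIndex H) (hp := ⟨h1⟩) rfl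
  have := commutative_of_cyclic_center_quotient (QuotientGroup.mk' (N.subgroupOf H))
    (by rw [QuotientGroup.ker_mk']; exact hNcen)
  exact this

theorem distinct_centralizers_inter_eq_center
    (G : Type*) [Group G] (p q r : ℕ)
    (hp : p.Prime) (hq : q.Prime) (hr : r.Prime)
    (h : Nat.card (G ⧸ Subgroup.center G) = p * q * r)
    (x y : G) (hx : x ∉ Subgroup.center G) (hy : y ∉ Subgroup.center G)
    (hne : Subgroup.centralizer ({x} : Set G) ≠ Subgroup.centralizer ({y} : Set G)) :
    Subgroup.centralizer ({x} : Set G) ⊓ Subgroup.centralizer ({y} : Set G)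
      = Subgroup.center G := by
  refine le_antisymm ?_ (le_inf (Subgroup.center_le_centralizer _)
    (Subgroup.center_le_centralizer _))
  intro z hz
  obtain ⟨hzx, hzy⟩ := hz
  by_contra hzZ
  -- the three centralizers are abelian
  have hCx := centralizer_comm hp hq hr h hx
  have hCy := centralizer_comm hp hq hr h hy
  have hCz := centralizer_comm hp hq hr h hzZ
  have hxz : x ∈ Subgroup.centralizer ({z} : Set G) := by
    rw [mem_centralizer_singleton_iff]
    exact ((mem_centralizer_singleton_iff).mp hzx).symm
  have hyz : y ∈ Subgroup.centralizer ({z} : Set G) := by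
    rw [mem_centralizer_singleton_iff]
    exact ((mem_centralizer_singleton_iff).mp hzy).symm
  -- abelian centralizer containing both elements gives inclusion
  have key : ∀ u v : G, v ∈ Subgroup.centralizer ({u} : Set G) →
      (∀ a b : Subgroup.centralizer ({u} : Set G), a * b = b * a) →
      Subgroup.centralizer ({u} : Set G) ≤ Subgroup.centralizer ({v} : Set G) := by
    intro u v hv habel g hg
    rw [mem_centralizer_singleton_iff]
    have := habel ⟨g, hg⟩ ⟨v, hv⟩
    simpa using congrArg Subtype.val this
  apply hne
  have h1 : Subgroup.centralizer ({x} : Set G) ≤ Subgroup.centralizer ({z} : Set G) :=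
    key x z hzx hCx
  have h2 : Subgroup.centralizer ({z} : Set G) ≤ Subgroup.centralizer ({x} : Set G) :=
    key z x hxz hCz
  have h3 : Subgroup.centralizer ({y} : Set G) ≤ Subgroup.centralizer ({z} : Set G) :=
    key y z hzy hCy
  have h4 : Subgroup.centralizer ({z} : Set G) ≤ Subgroup.centralizer ({y} : Set G) :=
    key z y hyz hCz
  rw [le_antisymm h1 h2, le_antisymm h4 h3]
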